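/- Let G₁ and G₂ be groups with automatic structures L₁ ⊆ A* for π₁ : A* → G₁ and L₂ ⊆ B* for π₂ : B* → G₂, and let φ, ψ : G₁ → G₂ be homomorphisms such that the synchronous BRP holds for (φ, L₁, L₂) and for (ψ, L₁, L₂). Then the subgroup {(xφ, xψ) : x ∈ Eq(φ,ψ)} of G₂ × G₂, which equals the intersection of the diagonal Δ = {(y,y) : y ∈ G₂} with the image of x ↦ (xφ, xψ), is (L₂ ⋄ L₂)-quasiconvex, where L₂ ⋄ L₂ is the convolution automatic structure on G₂ × G₂; in particular it is an automatic group. -/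

import Mathlib

open scoped NNReal

namespace Auto

/-- The generating set `Aπ ∪ (Aπ)⁻¹` of `G` determined by `π : A* → G`. -/
def gens {A G : Type*} [Group G] (π : FreeMonoid A →* G) : Set G :=
  (Set.range fun a : A => π (FreeMonoid.of a)) ∪
    Set.range fun a : A => (π (FreeMonoid.of a))⁻¹

/-- The word metric `d_A` on `G`: the least `n` such that `g⁻¹h` is a product of `n`
elements of `Aπ ∪ (Aπ)⁻¹`. -/
noncomputable def wdist {A G : Type*} [Group G] (π : FreeMonoid A →* G) (g h : G) : ℕ :=
  sInf {n : ℕ | ∃ l : List G, l.length = n ∧ (∀ x ∈ l, x ∈ gens π) ∧ l.prod = g⁻¹ * h}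

/-- Evaluation of a word of `A*` in `G`. -/
def evalW {A G : Type*} [Group G] (π : FreeMonoid A →* G) (w : List A) : G :=
  π (FreeMonoid.ofList w)

/-- `u` and `v` `p`-fellow travel: `d_A(u^[n]π, v^[n]π) ≤ p` for all `n`. -/
def FellowTravel {A G : Type*} [Group G] (π : FreeMonoid A →* G) (p : ℝ≥0)
    (u v : List A) : Prop :=
  ∀ n : ℕ, (wdist π (evalW π (u.take n)) (evalW π (v.take n)) : ℝ≥0) ≤ p

/-- `u` and `v` are `p`-meeting-fellow-travellers. -/
def MFT {A G : Type*} [Group G] (π : FreeMonoid A →* G) (p : ℝ≥0) (u v : List A) : Prop :=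
  FellowTravel π p u v ∧ evalW π u = evalW π v

/-- A language is regular if it is accepted by a finite-state automaton. -/
def IsRegular {A : Type*} (L : Language A) : Prop :=
  ∃ (σ : Type) (_ : Fintype σ) (M : DFA A σ), M.accepts = L

/-- `L` is an automatic structure for `π`. -/
structure IsAutomaticStructure {A G : Type*} [Group G] (π : FreeMonoid A →* G)
    (L : Language A) : Prop where
  regular : IsRegular L
  onto : ∀ g : G, ∃ w ∈ L, evalW π w = g
  ft : ∃ N : ℕ, ∀ u ∈ L, ∀ v ∈ L,
    wdist π (evalW π u) (evalW π v) ≤ 1 → FellowTravel π N u v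

/-- Evaluation of an element of `A ∪ {ε}`. -/
def evalOpt {A G : Type*} [Group G] (π : FreeMonoid A →* G) : Option A → G
  | none => 1
  | some a => π (FreeMonoid.of a)

/-- `L` is a biautomatic structure for `π`. -/
structure IsBiautomaticStructure {A G : Type*} [Group G] (π : FreeMonoid A →* G)
    (L : Language A) extends IsAutomaticStructure π L : Prop where
  bi : ∃ N : ℕ, ∀ u ∈ L, ∀ v ∈ L, ∀ a : Option A,
    evalW π v = evalOpt π a * evalW π u →
    ∀ n : ℕ, wdist π (evalOpt π a * evalW π (u.take n)) (evalW π (v.take n)) ≤ N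

/-- A language is factorial if it is closed under taking factors. -/
def IsFactorial {A : Type*} (L : Language A) : Prop :=
  ∀ u ∈ L, ∀ v : List A, v <:+: u → v ∈ L

/-- `D : ℝ≥0 → ℝ≥0` is a departure function for `(G, L)`. -/
def IsDepartureFunction {A G : Type*} [Group G] (π : FreeMonoid A →* G) (L : Language A)
    (D : ℝ≥0 → ℝ≥0) : Prop :=
  ∀ w ∈ L, ∀ r : ℝ≥0, ∀ s t : ℕ, D r ≤ (t : ℝ≥0) → s + t ≤ w.length →
    r < (wdist π (evalW π (w.take s)) (evalW π (w.take (s + t))) : ℝ≥0)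

/-- Every point of `S` is within distance `N` of `T`. -/
def NbhdIn {A G : Type*} [Group G] (π : FreeMonoid A →* G) (N : ℕ) (S T : Set G) : Prop :=
  ∀ s ∈ S, ∃ t ∈ T, wdist π s t ≤ N

/-- The Hausdorff distance between `S` and `T` is at most `N`. -/
def HausdorffLE {A G : Type*} [Group G] (π : FreeMonoid A →* G) (N : ℕ)
    (S T : Set G) : Prop :=
  NbhdIn π N S T ∧ NbhdIn π N T S

/-- `H` is an `L`-quasiconvex subgroup of `G`. -/
def IsQuasiconvex {A G : Type*} [Group G] (π : FreeMonoid A →* G) (L : Language A)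
    (H : Subgroup G) : Prop :=
  ∃ k : ℕ, ∀ h ∈ H, ∀ h' ∈ H, ∀ w ∈ L, h * evalW π w = h' →
    ∀ n : ℕ, ∃ z ∈ H, wdist π (h * evalW π (w.take n)) z ≤ k

/-- The bounded reduction property for `(φ, L, L')`. -/
def BRP {A B G G' : Type*} [Group G] [Group G'] (π : FreeMonoid A →* G)
    (π' : FreeMonoid B →* G') (φ : G →* G') (L : Language A) (L' : Language B) : Prop :=
  ∃ N : ℕ, ∀ x : G, ∀ α ∈ L, ∀ β ∈ L', evalW π' β = φ (evalW π α) →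
    HausdorffLE π' N (Set.range fun n : ℕ => φ (x * evalW π (α.take n)))
      (Set.range fun n : ℕ => φ x * evalW π' (β.take n))

/-- The synchronous bounded reduction property for `(φ, L, L')`. -/
def SyncBRP {A B G G' : Type*} [Group G] [Group G'] (π : FreeMonoid A →* G)
    (π' : FreeMonoid B →* G') (φ : G →* G') (L : Language A) (L' : Language B) : Prop :=
  ∃ N : ℕ, ∀ x : G, ∀ α ∈ L, ∀ β ∈ L', evalW π' β = φ (evalW π α) →
    ∀ n : ℕ, wdist π' (φ (x * evalW π (α.take n))) (φ x * evalW π' (β.take n)) ≤ N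

/-- The fellow traveller bounded reduction property (FT-BRP) for `(φ, L, L')`. -/
def FTBRP {A B G G' : Type*} [Group G] [Group G'] (π : FreeMonoid A →* G)
    (π' : FreeMonoid B →* G') (φ : G →* G') (L : Language A) (L' : Language B) : Prop :=
  ∀ p : ℝ≥0, ∃ q : ℝ≥0,
    ∀ u₁ ∈ L, ∀ u₂ ∈ L, ∀ u₃ ∈ L, ∀ u₁' ∈ L', ∀ u₂' ∈ L', ∀ u₃' ∈ L',
      evalW π' u₁' = φ (evalW π u₁) → evalW π' u₂' = φ (evalW π u₂) →
        evalW π' u₃' = φ (evalW π u₃) →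
          MFT π p (u₁ ++ u₂) u₃ → MFT π' q (u₁' ++ u₂') u₃'

/-- The natural homomorphism `(A ⊔ B)* → G` agreeing with `π₁` on `A` and `π₂` on `B`. -/
def sumHom {A B G : Type*} [Group G] (π₁ : FreeMonoid A →* G) (π₂ : FreeMonoid B →* G) :
    FreeMonoid (A ⊕ B) →* G :=
  FreeMonoid.lift (Sum.elim (fun a => π₁ (FreeMonoid.of a)) fun b => π₂ (FreeMonoid.of b))

/-- The union `L₁ ∪ L₂` viewed as a language over `A ⊔ B`. -/
def unionLang {A B : Type*} (L₁ : Language A) (L₂ : Language B) : Language (A ⊕ B) :=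
  {w : List (A ⊕ B) | (∃ u ∈ L₁, w = u.map Sum.inl) ∨ ∃ v ∈ L₂, w = v.map Sum.inr}

/-- `L` is an asynchronous automatic structure for `π`. -/
def IsAsyncAutomaticStructure {A G : Type*} [Group G] (π : FreeMonoid A →* G)
    (L : Language A) : Prop :=
  IsRegular L ∧ (∀ g : G, ∃ w ∈ L, evalW π w = g) ∧
    ∃ p : ℕ, ∀ u ∈ L, ∀ v ∈ L, wdist π (evalW π u) (evalW π v) ≤ 1 →
      ∃ φ ψ : ℕ → ℕ, Monotone φ ∧ Monotone ψ ∧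
        Function.Surjective φ ∧ Function.Surjective ψ ∧
          ∀ t : ℕ, wdist π (evalW π (u.take (φ t))) (evalW π (v.take (ψ t))) ≤ p

/-- `L₁` and `L₂` are equivalent automatic structures. -/
def LangEquivalent {A B G : Type*} [Group G] (π₁ : FreeMonoid A →* G)
    (π₂ : FreeMonoid B →* G) (L₁ : Language A) (L₂ : Language B) : Prop :=
  IsAsyncAutomaticStructure (sumHom π₁ π₂) (unionLang L₁ L₂)

/-- `L₁` and `L₂` are synchronously equivalent automatic structures. -/
def LangSyncEquivalent {A B G : Type*} [Group G] (π₁ : FreeMonoid A →* G)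
    (π₂ : FreeMonoid B →* G) (L₁ : Language A) (L₂ : Language B) : Prop :=
  IsAutomaticStructure (sumHom π₁ π₂) (unionLang L₁ L₂)

/-- `L` has the Hausdorff closeness property. -/
def HausClose {A G : Type*} [Group G] (π : FreeMonoid A →* G) (L : Language A) : Prop :=
  ∃ N : ℕ, ∀ u ∈ L, ∀ v ∈ L, wdist π (evalW π u) (evalW π v) ≤ 1 →
    HausdorffLE π N (Set.range fun n : ℕ => evalW π (u.take n))
      (Set.range fun n : ℕ => evalW π (v.take n))

/-- The padded alphabet `C = (A×B) ∪ (A×{$}) ∪ ({$}×B)` of convolution. -/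
abbrev ConvAlphabet (A B : Type*) := (A × B) ⊕ (A ⊕ B)

/-- The convolution `u ⋄ v` of two words. -/
def conv {A B : Type*} : List A → List B → List (ConvAlphabet A B)
  | [], [] => []
  | [], b :: v => Sum.inr (Sum.inr b) :: conv [] v
  | a :: u, [] => Sum.inr (Sum.inl a) :: conv u []
  | a :: u, b :: v => Sum.inl (a, b) :: conv u v
  termination_by u v => u.length + v.length

/-- The convolution `L₁ ⋄ L₂` of two languages. -/
def convLang {A B : Type*} (L₁ : Language A) (L₂ : Language B) :
    Language (ConvAlphabet A B) :=
  {w : List (ConvAlphabet A B) | ∃ u ∈ L₁, ∃ v ∈ L₂, w = conv u v}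

/-- The natural homomorphism `C* → G × G'` for the convolution alphabet. -/
def convHom {A B G G' : Type*} [Group G] [Group G'] (π₁ : FreeMonoid A →* G)
    (π₂ : FreeMonoid B →* G') : FreeMonoid (ConvAlphabet A B) →* G × G' :=
  FreeMonoid.lift fun c =>
    match c with
    | Sum.inl (a, b) => (π₁ (FreeMonoid.of a), π₂ (FreeMonoid.of b))
    | Sum.inr (Sum.inl a) => (π₁ (FreeMonoid.of a), 1)
    | Sum.inr (Sum.inr b) => (1, π₂ (FreeMonoid.of b))

/-- A group is automatic if it admits an automatic structure over some finite alphabet. -/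
def IsAutomaticGroup (G : Type*) [Group G] : Prop :=
  ∃ (A : Type) (_ : Fintype A) (π : FreeMonoid A →* G) (L : Language A),
    IsAutomaticStructure π L

/-! ### Auxiliary infrastructure -/

section Basic

variable {A G : Type*} [Group G] (π : FreeMonoid A →* G)

/-- `g` is representable as a product of generators. -/
def Reps (g : G) : Prop :=
  ∃ l : List G, (∀ x ∈ l, x ∈ gens π) ∧ l.prod = g

lemma mem_gens_of (a : A) : π (FreeMonoid.of a) ∈ gens π :=
  Or.inl ⟨a, rfl⟩

lemma gens_inv {x : G} (hx : x ∈ gens π) : x⁻¹ ∈ gens π := by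
  rcases hx with ⟨a, rfl⟩ | ⟨a, rfl⟩
  · exact Or.inr ⟨a, rfl⟩
  · exact Or.inl ⟨a, by simp⟩

lemma evalW_nil : evalW π ([] : List A) = 1 := map_one π

lemma evalW_cons (a : A) (l : List A) :
    evalW π (a :: l) = π (FreeMonoid.of a) * evalW π l := by
  have : FreeMonoid.ofList (a :: l) = FreeMonoid.of a * FreeMonoid.ofList l := rfl
  rw [evalW, this, map_mul]; rfl

lemma evalW_append (u v : List A) :
    evalW π (u ++ v) = evalW π u * evalW π v := by
  have : FreeMonoid.ofList (u ++ v) = FreeMonoid.ofList u * FreeMonoid.ofList v := rfl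
  rw [evalW, this, map_mul]; rfl

lemma evalW_eq_prod (l : List A) :
    evalW π l = (l.map fun a => π (FreeMonoid.of a)).prod := by
  induction l with
  | nil => simp [evalW_nil]
  | cons a t ih => simp [evalW_cons, ih]

lemma reps_of_eval (l : List A) : Reps π (evalW π l) := by
  refine ⟨l.map fun a => π (FreeMonoid.of a), ?_, (evalW_eq_prod π l).symm⟩
  intro x hx
  rcases List.mem_map.1 hx with ⟨a, -, rfl⟩
  exact mem_gens_of π a

lemma reps_of_surjective (hπ : Function.Surjective π) (g : G) : Reps π g := by
  rcases hπ g with ⟨w, rfl⟩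
  simpa [evalW] using reps_of_eval π w.toList

lemma wdist_le {g h : G} {l : List G} (hl : ∀ x ∈ l, x ∈ gens π)
    (hp : l.prod = g⁻¹ * h) : wdist π g h ≤ l.length :=
  Nat.sInf_le ⟨l, rfl, hl, hp⟩

lemma wdist_min {g h : G} (hr : Reps π (g⁻¹ * h)) :
    ∃ l : List G, l.length = wdist π g h ∧ (∀ x ∈ l, x ∈ gens π) ∧ l.prod = g⁻¹ * h := by
  rcases hr with ⟨l, hl, hp⟩
  have hne : {n : ℕ | ∃ l : List G, l.length = n ∧ (∀ x ∈ l, x ∈ gens π) ∧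
      l.prod = g⁻¹ * h}.Nonempty := ⟨l.length, l, rfl, hl, hp⟩
  exact Nat.sInf_mem hne

lemma exists_of_wdist_le {g h : G} {n : ℕ} (hr : Reps π (g⁻¹ * h))
    (hd : wdist π g h ≤ n) :
    ∃ l : List G, l.length ≤ n ∧ (∀ x ∈ l, x ∈ gens π) ∧ l.prod = g⁻¹ * h := by
  rcases wdist_min π hr with ⟨l, hlen, hl, hp⟩
  exact ⟨l, hlen ▸ hd, hl, hp⟩

lemma wdist_self (g : G) : wdist π g g = 0 :=
  Nat.le_zero.1 (by simpa using wdist_le π (l := []) (by simp) (by simp))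

lemma wdist_eq_of_eq {g h : G} (e : g = h) : wdist π g h = 0 := e ▸ wdist_self π g

lemma wdist_congr {g h g' h' : G} (e : g⁻¹ * h = g'⁻¹ * h') :
    wdist π g h = wdist π g' h' := by
  unfold wdist
  rw [e]

lemma wdist_left_inv (x g h : G) : wdist π (x * g) (x * h) = wdist π g h :=
  wdist_congr π (by group)

lemma wdist_symm_le {g h : G} (hr : Reps π (g⁻¹ * h)) : wdist π h g ≤ wdist π g h := by
  rcases wdist_min π hr with ⟨l, hlen, hl, hp⟩
  have hprod : ((l.map fun x => x⁻¹).reverse).prod = h⁻¹ * g := by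
    rw [← List.prod_inv_reverse, hp]; group
  have hmem : ∀ x ∈ (l.map fun x => x⁻¹).reverse, x ∈ gens π := by
    intro x hx
    rcases List.mem_map.1 (List.mem_reverse.1 hx) with ⟨y, hy, rfl⟩
    exact gens_inv π (hl y hy)
  calc wdist π h g ≤ ((l.map fun x => x⁻¹).reverse).length := wdist_le π hmem hprod
  _ = wdist π g h := by simpa using hlen

lemma wdist_triangle {g m h : G} (h₁ : Reps π (g⁻¹ * m)) (h₂ : Reps π (m⁻¹ * h)) :
    wdist π g h ≤ wdist π g m + wdist π m h := by
  rcases wdist_min π h₁ with ⟨l₁, e₁, hl₁, hp₁⟩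
  rcases wdist_min π h₂ with ⟨l₂, e₂, hl₂, hp₂⟩
  have : (l₁ ++ l₂).prod = g⁻¹ * h := by
    rw [List.prod_append, hp₁, hp₂]; group
  have hmem : ∀ x ∈ l₁ ++ l₂, x ∈ gens π := by
    intro x hx
    rcases List.mem_append.1 hx with h | h
    exacts [hl₁ x h, hl₂ x h]
  have := wdist_le π hmem this
  simpa [e₁, e₂] using this

/-- products of at most `k` generators allowing also the identity. -/
lemma prune_ones {s : Set G} :
    ∀ l : List G, (∀ x ∈ l, x ∈ insert (1 : G) s) →
      ∃ l' : List G, l'.length ≤ l.length ∧ (∀ x ∈ l', x ∈ s) ∧ l'.prod = l.prod := by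
  intro l
  induction l with
  | nil => exact fun _ => ⟨[], by simp, by simp, by simp⟩
  | cons a t ih =>
    intro hmem
    obtain ⟨l', h1, h2, h3⟩ := ih (fun x hx => hmem x (List.mem_cons_of_mem a hx))
    rcases hmem a (List.mem_cons_self) with rfl | ha
    · exact ⟨l', by simpa using Nat.le_succ_of_le h1, h2, by simp [h3]⟩
    · exact ⟨a :: l', by simpa using h1, by
        intro x hx; rcases List.mem_cons.1 hx with rfl | hx
        exacts [ha, h2 x hx], by simp [h3]⟩

lemma wdist_le_of_ones {g h : G} {l : List G} (hl : ∀ x ∈ l, x ∈ insert (1 : G) (gens π))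
    (hp : l.prod = g⁻¹ * h) : wdist π g h ≤ l.length := by
  obtain ⟨l', h1, h2, h3⟩ := prune_ones l hl
  exact le_trans (wdist_le π h2 (h3.trans hp)) h1

/-- The ball of radius `k` around the identity. -/
def Bset (k : ℕ) : Set G :=
  {g | ∃ l : List G, l.length ≤ k ∧ (∀ x ∈ l, x ∈ gens π) ∧ l.prod = g}

lemma one_mem_Bset (k : ℕ) : (1 : G) ∈ Bset π k := ⟨[], by simp, by simp, by simp⟩

lemma Bset_mono {k k' : ℕ} (hk : k ≤ k') : Bset π k ⊆ Bset π k' := by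
  rintro g ⟨l, h1, h2, h3⟩
  exact ⟨l, le_trans h1 hk, h2, h3⟩

lemma wdist_le_of_mem_Bset {g : G} {k : ℕ} (hg : g ∈ Bset π k) : wdist π 1 g ≤ k := by
  rcases hg with ⟨l, h1, h2, h3⟩
  exact le_trans (wdist_le π h2 (by simpa using h3)) h1

lemma mem_Bset_of_wdist {g h : G} {k : ℕ} (hr : Reps π (g⁻¹ * h))
    (hd : wdist π g h ≤ k) : g⁻¹ * h ∈ Bset π k := by
  rcases exists_of_wdist_le π hr hd with ⟨l, h1, h2, h3⟩
  exact ⟨l, h1, h2, h3⟩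

lemma gens_finite [Fintype A] : (gens π).Finite :=
  (Set.finite_range _).union (Set.finite_range _)

lemma Bset_finite [Fintype A] (k : ℕ) : (Bset π k).Finite := by
  induction k with
  | zero =>
    refine Set.Finite.subset (Set.finite_singleton (1 : G)) ?_
    rintro g ⟨l, h1, -, h3⟩
    interval_cases h : l.length
    · simp [List.length_eq_zero_iff.1 h] at h3; simp [← h3]
  | succ k ih =>
    refine Set.Finite.subset (((gens_finite π).insert 1).mul ih) ?_
    rintro g ⟨l, h1, h2, h3⟩
    match l, h1, h2, h3 with
    | [], _, _, h3 => exact ⟨1, Set.mem_insert _ _, 1, one_mem_Bset π k, by simp [← h3]⟩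
    | x :: t, h1, h2, h3 =>
      exact ⟨x, Set.mem_insert_of_mem _ (h2 x (by simp)),
        t.prod, ⟨t, by simpa [Nat.succ_le_succ_iff] using h1,
          fun y hy => h2 y (List.mem_cons_of_mem x hy), rfl⟩, by simp [← h3]⟩

lemma wdist_take_succ {u : List A} (n : ℕ) :
    wdist π (evalW π (u.take n)) (evalW π (u.take (n + 1))) ≤ 1 := by
  rw [List.take_succ]
  rcases h : u[n]? with - | a
  · simp [evalW_append, wdist_self]
  · have : evalW π (u.take n ++ (u[n]?).toList) =
        evalW π (u.take n) * π (FreeMonoid.of a) := by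
      rw [h]; simp [evalW_append, evalW_cons, evalW_nil]
    rw [h] at this
    refine le_trans (wdist_le π (l := [π (FreeMonoid.of a)]) (by simp [mem_gens_of]) ?_) (by simp)
    rw [this, List.prod_singleton]; group

end Basic

section ExtFT

variable {A G : Type*} [Group G] {π : FreeMonoid A →* G} {L : Language A}

lemma ft_nat (hL : IsAutomaticStructure π L) :
    ∃ N : ℕ, ∀ u ∈ L, ∀ v ∈ L, wdist π (evalW π u) (evalW π v) ≤ 1 →
      ∀ n, wdist π (evalW π (u.take n)) (evalW π (v.take n)) ≤ N := by
  obtain ⟨N, hN⟩ := hL.ft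
  refine ⟨N, fun u hu v hv hd n => ?_⟩
  have := hN u hu v hv hd n
  exact_mod_cast this

lemma ext_ft (hπ : Function.Surjective π) (hL : IsAutomaticStructure π L) (K : ℕ) :
    ∃ N : ℕ, ∀ u ∈ L, ∀ v ∈ L, wdist π (evalW π u) (evalW π v) ≤ K →
      ∀ n, wdist π (evalW π (u.take n)) (evalW π (v.take n)) ≤ N := by
  obtain ⟨N₁, hN₁⟩ := ft_nat hL
  induction K with
  | zero => exact ⟨N₁, fun u hu v hv hd n => hN₁ u hu v hv (hd.trans (by norm_num)) n⟩
  | succ K ih =>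
    obtain ⟨N, hN⟩ := ih
    refine ⟨N + N₁, fun u hu v hv hd n => ?_⟩
    obtain ⟨l, hlen, hmem, hprod⟩ :=
      exists_of_wdist_le π (reps_of_surjective π hπ _) hd
    set m := evalW π u * (l.take K).prod with hm
    have h1 : wdist π (evalW π u) m ≤ K := by
      refine le_trans (wdist_le π (l := l.take K)
        (fun x hx => hmem x (List.mem_of_mem_take hx)) (by rw [hm]; group)) ?_
      simp
    have h2 : wdist π m (evalW π v) ≤ 1 := by
      have hp : (l.drop K).prod = m⁻¹ * evalW π v := by
        rw [hm]
        calc (l.drop K).prod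
            = (l.take K).prod⁻¹ * ((l.take K).prod * (l.drop K).prod) := by group
          _ = (l.take K).prod⁻¹ * ((evalW π u)⁻¹ * evalW π v) := by
              rw [← List.prod_append, List.take_append_drop, hprod]
          _ = _ := by group
      refine le_trans (wdist_le π (l := l.drop K)
        (fun x hx => hmem x (List.mem_of_mem_drop hx)) hp) ?_
      simp only [List.length_drop]
      omega
    obtain ⟨w, hw, hwm⟩ := hL.onto m
    have t1 := hN u hu w hw (by rw [hwm]; exact h1) n
    have t2 := hN₁ w hw v hv (by rw [hwm]; exact h2) n
    calc wdist π (evalW π (u.take n)) (evalW π (v.take n))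
        ≤ wdist π (evalW π (u.take n)) (evalW π (w.take n)) +
            wdist π (evalW π (w.take n)) (evalW π (v.take n)) :=
          wdist_triangle π (reps_of_surjective π hπ _) (reps_of_surjective π hπ _)
      _ ≤ N + N₁ := add_le_add t1 t2

end ExtFT

section ConvLemmas

variable {A B G G' : Type*} [Group G] [Group G'] (πa : FreeMonoid A →* G)
  (πb : FreeMonoid B →* G')

lemma conv_nil_nil : conv ([] : List A) ([] : List B) = [] := by rw [conv]

lemma conv_nil_cons (b : B) (v : List B) :
    conv ([] : List A) (b :: v) = Sum.inr (Sum.inr b) :: conv [] v := by rw [conv]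

lemma conv_cons_nil (a : A) (u : List A) :
    conv (a :: u) ([] : List B) = Sum.inr (Sum.inl a) :: conv u [] := by rw [conv]

lemma conv_cons_cons (a : A) (u : List A) (b : B) (v : List B) :
    conv (a :: u) (b :: v) = Sum.inl (a, b) :: conv u v := by rw [conv]

lemma convHom_inl (a : A) (b : B) :
    convHom πa πb (FreeMonoid.of (Sum.inl (a, b))) =
      (πa (FreeMonoid.of a), πb (FreeMonoid.of b)) := by
  simp [convHom]

lemma convHom_inr_inl (a : A) :
    convHom πa πb (FreeMonoid.of (Sum.inr (Sum.inl a))) = (πa (FreeMonoid.of a), 1) := by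
  simp [convHom]

lemma convHom_inr_inr (b : B) :
    convHom πa πb (FreeMonoid.of (Sum.inr (Sum.inr b))) = (1, πb (FreeMonoid.of b)) := by
  simp [convHom]

lemma conv_take_nil_left :
    ∀ (v : List B) (n : ℕ),
      evalW (convHom πa πb) ((conv ([] : List A) v).take n) = (1, evalW πb (v.take n))
  | [], n => by
    rw [conv_nil_nil, List.take_nil, List.take_nil, evalW_nil, evalW_nil]; rfl
  | b :: v, 0 => by
    rw [List.take_zero, List.take_zero, evalW_nil, evalW_nil]; rfl
  | b :: v, n + 1 => by
    rw [conv_nil_cons, List.take_succ_cons, List.take_succ_cons, evalW_cons, evalW_cons,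
      conv_take_nil_left v n, convHom_inr_inr, Prod.mk_mul_mk, one_mul]

lemma conv_take_nil_right :
    ∀ (u : List A) (n : ℕ),
      evalW (convHom πa πb) ((conv u ([] : List B)).take n) = (evalW πa (u.take n), 1)
  | [], n => by
    rw [conv_nil_nil, List.take_nil, List.take_nil, evalW_nil, evalW_nil]; rfl
  | a :: u, 0 => by
    rw [List.take_zero, List.take_zero, evalW_nil, evalW_nil]; rfl
  | a :: u, n + 1 => by
    rw [conv_cons_nil, List.take_succ_cons, List.take_succ_cons, evalW_cons, evalW_cons,
      conv_take_nil_right u n, convHom_inr_inl, Prod.mk_mul_mk, one_mul]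

lemma conv_take :
    ∀ (u : List A) (v : List B) (n : ℕ),
      evalW (convHom πa πb) ((conv u v).take n) =
        (evalW πa (u.take n), evalW πb (v.take n))
  | [], v, n => by
    rw [conv_take_nil_left, List.take_nil, evalW_nil]
  | a :: u, [], n => by
    rw [conv_take_nil_right, List.take_nil, evalW_nil]
  | a :: u, b :: v, 0 => by
    rw [List.take_zero, List.take_zero, List.take_zero, evalW_nil, evalW_nil, evalW_nil]; rfl
  | a :: u, b :: v, n + 1 => by
    rw [conv_cons_cons, List.take_succ_cons, List.take_succ_cons, List.take_succ_cons,
      evalW_cons, evalW_cons, evalW_cons, conv_take u v n, convHom_inl, Prod.mk_mul_mk]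

lemma evalW_conv (u : List A) (v : List B) :
    evalW (convHom πa πb) (conv u v) = (evalW πa u, evalW πb v) := by
  have h := conv_take πa πb u v ((conv u v).length + u.length + v.length)
  rw [List.take_of_length_le (by omega), List.take_of_length_le (by omega),
    List.take_of_length_le (by omega)] at h
  exact h

lemma gens_conv_left {x : G} (hx : x ∈ gens πa) :
    ((x, 1) : G × G') ∈ gens (convHom πa πb) := by
  rcases hx with ⟨a, rfl⟩ | ⟨a, rfl⟩
  · exact Or.inl ⟨Sum.inr (Sum.inl a), (convHom_inr_inl πa πb a)⟩
  · refine Or.inr ⟨Sum.inr (Sum.inl a), ?_⟩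
    show (convHom πa πb (FreeMonoid.of (Sum.inr (Sum.inl a))))⁻¹ = _
    rw [convHom_inr_inl]
    simp [Prod.ext_iff]

lemma gens_conv_right {y : G'} (hy : y ∈ gens πb) :
    ((1, y) : G × G') ∈ gens (convHom πa πb) := by
  rcases hy with ⟨b, rfl⟩ | ⟨b, rfl⟩
  · exact Or.inl ⟨Sum.inr (Sum.inr b), (convHom_inr_inr πa πb b)⟩
  · refine Or.inr ⟨Sum.inr (Sum.inr b), ?_⟩
    show (convHom πa πb (FreeMonoid.of (Sum.inr (Sum.inr b))))⁻¹ = _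
    rw [convHom_inr_inr]
    simp [Prod.ext_iff]

lemma prod_map_pair_left (l : List G) :
    (l.map fun x => ((x, 1) : G × G')).prod = (l.prod, 1) := by
  induction l with
  | nil => rfl
  | cons a t ih => rw [List.map_cons, List.prod_cons, ih, List.prod_cons,
      Prod.mk_mul_mk, one_mul]

lemma prod_map_pair_right (l : List G') :
    (l.map fun y => ((1, y) : G × G')).prod = (1, l.prod) := by
  induction l with
  | nil => rfl
  | cons a t ih => rw [List.map_cons, List.prod_cons, ih, List.prod_cons,
      Prod.mk_mul_mk, one_mul]

lemma wdist_conv_le {a a' : G} {b b' : G'} (h₁ : Reps πa (a⁻¹ * a'))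
    (h₂ : Reps πb (b⁻¹ * b')) :
    wdist (convHom πa πb) (a, b) (a', b') ≤ wdist πa a a' + wdist πb b b' := by
  obtain ⟨l₁, e₁, m₁, p₁⟩ := wdist_min πa h₁
  obtain ⟨l₂, e₂, m₂, p₂⟩ := wdist_min πb h₂
  set L := (l₁.map fun x => ((x, 1) : G × G')) ++ (l₂.map fun y => ((1, y) : G × G'))
    with hL
  have hmem : ∀ x ∈ L, x ∈ gens (convHom πa πb) := by
    intro x hx
    rcases List.mem_append.1 hx with hx | hx
    · rcases List.mem_map.1 hx with ⟨y, hy, rfl⟩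
      exact gens_conv_left πa πb (m₁ y hy)
    · rcases List.mem_map.1 hx with ⟨y, hy, rfl⟩
      exact gens_conv_right πa πb (m₂ y hy)
  have hprod : L.prod = ((a, b) : G × G')⁻¹ * (a', b') := by
    rw [hL, List.prod_append, prod_map_pair_left, prod_map_pair_right,
      Prod.mk_mul_mk, one_mul, mul_one, p₁, p₂]
    rfl
  have := wdist_le (convHom πa πb) hmem hprod
  simpa [hL, e₁, e₂] using this

lemma fst_gens_conv {x : G × G'} (hx : x ∈ gens (convHom πa πb)) :
    x.1 ∈ insert (1 : G) (gens πa) := by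
  rcases hx with ⟨c, rfl⟩ | ⟨c, rfl⟩
  · rcases c with ⟨a, b⟩ | a | b
    · show (convHom πa πb (FreeMonoid.of (Sum.inl (a, b)))).1 ∈ _
      rw [convHom_inl]; exact Set.mem_insert_of_mem _ (mem_gens_of πa a)
    · show (convHom πa πb (FreeMonoid.of (Sum.inr (Sum.inl a)))).1 ∈ _
      rw [convHom_inr_inl]; exact Set.mem_insert_of_mem _ (mem_gens_of πa a)
    · show (convHom πa πb (FreeMonoid.of (Sum.inr (Sum.inr b)))).1 ∈ _
      rw [convHom_inr_inr]; exact Set.mem_insert _ _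
  · rcases c with ⟨a, b⟩ | a | b
    · show (convHom πa πb (FreeMonoid.of (Sum.inl (a, b))))⁻¹.1 ∈ _
      rw [convHom_inl]
      exact Set.mem_insert_of_mem _ (gens_inv πa (mem_gens_of πa a))
    · show (convHom πa πb (FreeMonoid.of (Sum.inr (Sum.inl a))))⁻¹.1 ∈ _
      rw [convHom_inr_inl]
      exact Set.mem_insert_of_mem _ (gens_inv πa (mem_gens_of πa a))
    · show (convHom πa πb (FreeMonoid.of (Sum.inr (Sum.inr b))))⁻¹.1 ∈ _
      rw [convHom_inr_inr]
      simp

lemma snd_gens_conv {x : G × G'} (hx : x ∈ gens (convHom πa πb)) :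
    x.2 ∈ insert (1 : G') (gens πb) := by
  rcases hx with ⟨c, rfl⟩ | ⟨c, rfl⟩
  · rcases c with ⟨a, b⟩ | a | b
    · show (convHom πa πb (FreeMonoid.of (Sum.inl (a, b)))).2 ∈ _
      rw [convHom_inl]; exact Set.mem_insert_of_mem _ (mem_gens_of πb b)
    · show (convHom πa πb (FreeMonoid.of (Sum.inr (Sum.inl a)))).2 ∈ _
      rw [convHom_inr_inl]; exact Set.mem_insert _ _
    · show (convHom πa πb (FreeMonoid.of (Sum.inr (Sum.inr b)))).2 ∈ _
      rw [convHom_inr_inr]; exact Set.mem_insert_of_mem _ (mem_gens_of πb b)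
  · rcases c with ⟨a, b⟩ | a | b
    · show (convHom πa πb (FreeMonoid.of (Sum.inl (a, b))))⁻¹.2 ∈ _
      rw [convHom_inl]
      exact Set.mem_insert_of_mem _ (gens_inv πb (mem_gens_of πb b))
    · show (convHom πa πb (FreeMonoid.of (Sum.inr (Sum.inl a))))⁻¹.2 ∈ _
      rw [convHom_inr_inl]
      simp
    · show (convHom πa πb (FreeMonoid.of (Sum.inr (Sum.inr b))))⁻¹.2 ∈ _
      rw [convHom_inr_inr]
      exact Set.mem_insert_of_mem _ (gens_inv πb (mem_gens_of πb b))

lemma prod_map_fst (l : List (G × G')) : (l.map Prod.fst).prod = l.prod.1 := by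
  induction l with
  | nil => rfl
  | cons a t ih => rw [List.map_cons, List.prod_cons, ih, List.prod_cons, Prod.fst_mul]

lemma prod_map_snd (l : List (G × G')) : (l.map Prod.snd).prod = l.prod.2 := by
  induction l with
  | nil => rfl
  | cons a t ih => rw [List.map_cons, List.prod_cons, ih, List.prod_cons, Prod.snd_mul]

lemma wdist_fst_le {a a' : G} {b b' : G'}
    (hr : Reps (convHom πa πb) (((a, b) : G × G')⁻¹ * (a', b'))) :
    wdist πa a a' ≤ wdist (convHom πa πb) (a, b) (a', b') := by
  obtain ⟨l, e, m, p⟩ := wdist_min (convHom πa πb) hr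
  have hmem : ∀ x ∈ l.map Prod.fst, x ∈ insert (1 : G) (gens πa) := by
    intro x hx
    rcases List.mem_map.1 hx with ⟨y, hy, rfl⟩
    exact fst_gens_conv πa πb (m y hy)
  have hp : (l.map Prod.fst).prod = a⁻¹ * a' := by
    rw [prod_map_fst, p]; rfl
  simpa [e] using wdist_le_of_ones πa hmem hp

lemma wdist_snd_le {a a' : G} {b b' : G'}
    (hr : Reps (convHom πa πb) (((a, b) : G × G')⁻¹ * (a', b'))) :
    wdist πb b b' ≤ wdist (convHom πa πb) (a, b) (a', b') := by
  obtain ⟨l, e, m, p⟩ := wdist_min (convHom πa πb) hr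
  have hmem : ∀ x ∈ l.map Prod.snd, x ∈ insert (1 : G') (gens πb) := by
    intro x hx
    rcases List.mem_map.1 hx with ⟨y, hy, rfl⟩
    exact snd_gens_conv πa πb (m y hy)
  have hp : (l.map Prod.snd).prod = b⁻¹ * b' := by
    rw [prod_map_snd, p]; rfl
  simpa [e] using wdist_le_of_ones πb hmem hp

lemma convHom_surjective (ha : Function.Surjective πa) (hb : Function.Surjective πb) :
    Function.Surjective (convHom πa πb) := by
  intro g
  obtain ⟨u', hu⟩ := ha g.1
  obtain ⟨v', hv⟩ := hb g.2
  refine ⟨FreeMonoid.ofList (conv u'.toList v'.toList), ?_⟩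
  have : convHom πa πb (FreeMonoid.ofList (conv u'.toList v'.toList)) =
      evalW (convHom πa πb) (conv u'.toList v'.toList) := rfl
  rw [this, evalW_conv]
  have h1 : evalW πa u'.toList = πa u' := rfl
  have h2 : evalW πb v'.toList = πb v' := rfl
  rw [h1, h2, hu, hv]

end ConvLemmas

section Part1

variable {A B G₁ G₂ : Type*} [Fintype A] [Fintype B] [Group G₁] [Group G₂]

lemma quasiconvex_of_syncBRP (π₁ : FreeMonoid A →* G₁) (π₂ : FreeMonoid B →* G₂)
    (hπ₂ : Function.Surjective π₂) (L₁ : Language A) (L₂ : Language B)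
    (h₁ : IsAutomaticStructure π₁ L₁) (h₂ : IsAutomaticStructure π₂ L₂)
    (φ ψ : G₁ →* G₂) (hφ : SyncBRP π₁ π₂ φ L₁ L₂) (hψ : SyncBRP π₁ π₂ ψ L₁ L₂) :
    IsQuasiconvex (convHom π₂ π₂) (convLang L₂ L₂)
      (((MonoidHom.id G₂).prod (MonoidHom.id G₂)).range ⊓ (φ.prod ψ).range) := by
  classical
  obtain ⟨N₀, hN₀⟩ := ft_nat h₂
  obtain ⟨N₁, hN₁⟩ := hφ
  obtain ⟨N₂, hN₂⟩ := hψ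
  set πc : FreeMonoid (ConvAlphabet B B) →* G₂ × G₂ := convHom π₂ π₂ with hπcdef
  have hπc : Function.Surjective πc := convHom_surjective π₂ π₂ hπ₂ hπ₂
  set K : ℕ := N₀ + (N₁ + N₂) with hK
  set Δr : Subgroup (G₂ × G₂) := ((MonoidHom.id G₂).prod (MonoidHom.id G₂)).range with hΔr
  set Rr : Subgroup (G₂ × G₂) := (φ.prod ψ).range with hRr
  set P : (G₂ × G₂) × (G₂ × G₂) → Prop :=
    fun d => ∃ p : G₂ × G₂, p * d.1⁻¹ ∈ Δr ∧ p * d.2⁻¹ ∈ Rr with hP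
  set D : Set ((G₂ × G₂) × (G₂ × G₂)) :=
    {d | d.1 ∈ Bset πc K ∧ d.2 ∈ Bset πc K ∧ P d} with hD
  have hDfin : D.Finite := by
    refine Set.Finite.subset ((Bset_finite πc K).prod (Bset_finite πc K)) ?_
    rintro ⟨da, db⟩ ⟨ha, hb, -⟩
    exact ⟨ha, hb⟩
  set f : (G₂ × G₂) × (G₂ × G₂) → ℕ :=
    fun d => if h : P d then wdist πc h.choose 1 else 0 with hf
  set k : ℕ := hDfin.toFinset.sup f with hk
  refine ⟨k, ?_⟩
  intro h hH h' hH' w hw heq n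
  obtain ⟨u, hu, v, hv, rfl⟩ := hw
  rw [Subgroup.mem_inf] at hH hH'
  obtain ⟨⟨y, hy⟩, ⟨x, hx⟩⟩ := hH
  obtain ⟨⟨y', hy'⟩, ⟨x', hx'⟩⟩ := hH'
  simp only [MonoidHom.prod_apply, MonoidHom.id_apply] at hy hx hy' hx'
  have hfxy : φ x = y ∧ ψ x = y := by
    constructor
    · exact congrArg Prod.fst (hx.trans hy.symm)
    · exact congrArg Prod.snd (hx.trans hy.symm)
  have hfxy' : φ x' = y' ∧ ψ x' = y' := by
    constructor
    · exact congrArg Prod.fst (hx'.trans hy'.symm)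
    · exact congrArg Prod.snd (hx'.trans hy'.symm)
  have heval : evalW πc (conv u v) = h⁻¹ * h' := by
    rw [← heq]; group
  have hevalc : (evalW π₂ u, evalW π₂ v) = h⁻¹ * h' := by
    rw [← evalW_conv, heval]
  have hu_eval : evalW π₂ u = φ (x⁻¹ * x') := by
    have := congrArg Prod.fst hevalc
    simp only at this
    rw [this, ← hx, ← hx', map_mul, map_inv]
    rfl
  have hv_eval : evalW π₂ v = ψ (x⁻¹ * x') := by
    have := congrArg Prod.snd hevalc
    simp only at this
    rw [this, ← hx, ← hx', map_mul, map_inv]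
    rfl
  have huv : evalW π₂ u = evalW π₂ v := by
    rw [hu_eval, hv_eval, map_mul, map_mul, map_inv, map_inv, hfxy.1, hfxy.2,
      hfxy'.1, hfxy'.2]
  obtain ⟨α, hα, hαev⟩ := h₁.onto (x⁻¹ * x')
  have hfel : ∀ m, wdist π₂ (evalW π₂ (u.take m)) (evalW π₂ (v.take m)) ≤ N₀ :=
    hN₀ u hu v hv (by rw [huv, wdist_self]; omega)
  have hφn := hN₁ x α hα u hu (by rw [hαev, hu_eval]) n
  have hψn := hN₂ x α hα v hv (by rw [hαev, hv_eval]) n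
  set un : G₂ := evalW π₂ (u.take n) with hun
  set vn : G₂ := evalW π₂ (v.take n) with hvn
  set p : G₂ × G₂ := h * evalW πc ((conv u v).take n) with hp
  have hpc : p = (φ x * un, ψ x * vn) := by
    rw [hp, conv_take, ← hx]
    rfl
  set hh : G₂ × G₂ := (φ x * un, φ x * un) with hhh
  have hhΔ : hh ∈ Δr := ⟨φ x * un, rfl⟩
  have hdist1 : wdist πc hh p ≤ N₀ := by
    rw [hpc, hhh]
    refine le_trans (wdist_conv_le π₂ π₂ (reps_of_surjective π₂ hπ₂ _)
      (reps_of_surjective π₂ hπ₂ _)) ?_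
    have e1 : wdist π₂ (φ x * un) (φ x * un) = 0 := wdist_self π₂ _
    have e2 : wdist π₂ (φ x * un) (ψ x * vn) ≤ N₀ := by
      have : ψ x = φ x := by rw [hfxy.1, hfxy.2]
      rw [this, wdist_left_inv]
      exact hfel n
    omega
  set q : G₂ × G₂ := (φ (x * evalW π₁ (α.take n)), ψ (x * evalW π₁ (α.take n))) with hq
  have hqR : q ∈ Rr := ⟨x * evalW π₁ (α.take n), rfl⟩
  have hdist2 : wdist πc q p ≤ N₁ + N₂ := by
    rw [hpc, hq]
    refine le_trans (wdist_conv_le π₂ π₂ (reps_of_surjective π₂ hπ₂ _)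
      (reps_of_surjective π₂ hπ₂ _)) ?_
    exact add_le_add hφn hψn
  set a : G₂ × G₂ := hh⁻¹ * p with ha
  set b : G₂ × G₂ := q⁻¹ * p with hb
  have haB : a ∈ Bset πc K := by
    refine Bset_mono πc (show N₀ ≤ K by omega) ?_
    exact mem_Bset_of_wdist πc (reps_of_surjective πc hπc _) hdist1
  have hbB : b ∈ Bset πc K := by
    refine Bset_mono πc (show N₁ + N₂ ≤ K by omega) ?_
    exact mem_Bset_of_wdist πc (reps_of_surjective πc hπc _) hdist2
  have hPd : P (a, b) := by
    refine ⟨p, ?_, ?_⟩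
    · have : p * a⁻¹ = hh := by rw [ha]; group
      rw [this]; exact hhΔ
    · have : p * b⁻¹ = q := by rw [hb]; group
      rw [this]; exact hqR
  have hdD : (a, b) ∈ D := ⟨haB, hbB, hPd⟩
  set p₀ : G₂ × G₂ := hPd.choose with hp₀
  obtain ⟨hp₀Δ, hp₀R⟩ := hPd.choose_spec
  set z : G₂ × G₂ := p * p₀⁻¹ with hz
  have hzΔ : z ∈ Δr := by
    have e : (p * a⁻¹) * (p₀ * a⁻¹)⁻¹ = z := by rw [hz]; group
    rw [← e]
    exact Subgroup.mul_mem _ (by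
      have : p * a⁻¹ = hh := by rw [ha]; group
      rw [this]; exact hhΔ) (Subgroup.inv_mem _ hp₀Δ)
  have hzR : z ∈ Rr := by
    have e : (p * b⁻¹) * (p₀ * b⁻¹)⁻¹ = z := by rw [hz]; group
    rw [← e]
    exact Subgroup.mul_mem _ (by
      have : p * b⁻¹ = q := by rw [hb]; group
      rw [this]; exact hqR) (Subgroup.inv_mem _ hp₀R)
  refine ⟨z, Subgroup.mem_inf.2 ⟨hzΔ, hzR⟩, ?_⟩
  have e1 : wdist πc p z = wdist πc p₀ 1 := wdist_congr πc (by rw [hz]; group)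
  have e2 : f (a, b) = wdist πc p₀ 1 := by
    rw [hf]
    simp only [dif_pos hPd]
    rfl
  calc wdist πc (h * evalW πc ((conv u v).take n)) z = wdist πc p z := by rw [hp]
    _ = f (a, b) := by rw [e1, e2]
    _ ≤ k := by
        rw [hk]
        exact Finset.le_sup (hDfin.mem_toFinset.2 hdD)

end Part1

section Automata

variable {α β : Type*} {σ τ : Type*}

/-- Product (intersection) DFA. -/
def dfaProd (M : DFA α σ) (N : DFA α τ) : DFA α (σ × τ) where
  step s a := (M.step s.1 a, N.step s.2 a)
  start := (M.start, N.start)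
  accept := {s | s.1 ∈ M.accept ∧ s.2 ∈ N.accept}

lemma dfaProd_evalFrom (M : DFA α σ) (N : DFA α τ) :
    ∀ (w : List α) (s : σ) (t : τ),
      (dfaProd M N).evalFrom (s, t) w = (M.evalFrom s w, N.evalFrom t w)
  | [], s, t => rfl
  | a :: w, s, t => by
    show (dfaProd M N).evalFrom ((dfaProd M N).step (s, t) a) w = _
    rw [dfaProd_evalFrom M N w]
    rfl

lemma dfaProd_mem_accepts (M : DFA α σ) (N : DFA α τ) (w : List α) :
    w ∈ (dfaProd M N).accepts ↔ w ∈ M.accepts ∧ w ∈ N.accepts := by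
  rw [DFA.mem_accepts, DFA.mem_accepts, DFA.mem_accepts]
  show (dfaProd M N).evalFrom (M.start, N.start) w ∈ _ ↔ _
  rw [dfaProd_evalFrom]
  exact Iff.rfl

/-- Pullback of a DFA along a letter map. -/
def dfaComap (g : β → α) (M : DFA α σ) : DFA β σ where
  step s b := M.step s (g b)
  start := M.start
  accept := M.accept

lemma dfaComap_evalFrom (g : β → α) (M : DFA α σ) :
    ∀ (w : List β) (s : σ),
      (dfaComap g M).evalFrom s w = M.evalFrom s (w.map g)
  | [], s => rfl
  | b :: w, s => by
    show (dfaComap g M).evalFrom ((dfaComap g M).step s b) w = _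
    rw [dfaComap_evalFrom g M w]
    rfl

lemma dfaComap_accepts (g : β → α) (M : DFA α σ) :
    (dfaComap g M).accepts = {w : List β | w.map g ∈ M.accepts} := by
  ext w
  show (dfaComap g M).evalFrom M.start w ∈ M.accept ↔ _
  rw [dfaComap_evalFrom]
  exact Iff.rfl

/-- Projection NFA along a letter map. -/
def nfaProj (g : α → β) (M : DFA α σ) : NFA β σ where
  step s b := {s' | ∃ a, g a = b ∧ M.step s a = s'}
  start := {M.start}
  accept := M.accept

lemma nfaProj_evalFrom (g : α → β) (M : DFA α σ) :
    ∀ (w : List β) (S : Set σ) (s' : σ),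
      s' ∈ (nfaProj g M).evalFrom S w ↔
        ∃ s ∈ S, ∃ p : List α, p.map g = w ∧ M.evalFrom s p = s'
  | [], S, s' => by
    constructor
    · intro hs
      exact ⟨s', hs, [], rfl, rfl⟩
    · rintro ⟨s, hs, p, hp, rfl⟩
      rw [List.map_eq_nil_iff.1 hp] at *
      exact hs
  | b :: w, S, s' => by
    show s' ∈ (nfaProj g M).evalFrom ((nfaProj g M).stepSet S b) w ↔ _
    rw [nfaProj_evalFrom g M w]
    constructor
    · rintro ⟨t, ht, p, hp, rfl⟩
      rcases NFA.mem_stepSet.1 ht with ⟨s, hs, hmem⟩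
      rcases hmem with ⟨a, hga, hstep⟩
      refine ⟨s, hs, a :: p, by rw [List.map_cons, hga, hp], ?_⟩
      show M.evalFrom (M.step s a) p = _
      rw [hstep]
    · rintro ⟨s, hs, p, hp, rfl⟩
      match p, hp with
      | a :: p, hp =>
        rw [List.map_cons, List.cons.injEq] at hp
        refine ⟨M.step s a, NFA.mem_stepSet.2 ⟨s, hs, a, hp.1, rfl⟩,
          p, hp.2, rfl⟩

lemma nfaProj_accepts (g : α → β) (M : DFA α σ) :
    (nfaProj g M).accepts = {w : List β | ∃ p : List α, p.map g = w ∧ p ∈ M.accepts} := by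
  ext w
  rw [NFA.mem_accepts]
  constructor
  · rintro ⟨s', hacc, hev⟩
    rcases (nfaProj_evalFrom g M w _ s').1 hev with ⟨s, hs, p, hp, rfl⟩
    rcases Set.mem_singleton_iff.1 hs
    exact ⟨p, hp, hacc⟩
  · rintro ⟨p, hp, hpacc⟩
    exact ⟨M.eval p, hpacc,
      (nfaProj_evalFrom g M w _ _).2 ⟨M.start, rfl, p, hp, rfl⟩⟩

lemma isRegular_proj (g : α → β) {σ : Type} [Fintype σ] (M : DFA α σ) :
    IsRegular {w : List β | ∃ p : List α, p.map g = w ∧ p ∈ M.accepts} := by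
  classical
  refine ⟨Set σ, inferInstance, (nfaProj g M).toDFA, ?_⟩
  rw [NFA.toDFA_correct, nfaProj_accepts]

end Automata

section ConvDFA

/-- Padding mode for the convolution automaton. -/
inductive ConvMode : Type
  | both | left | right
  deriving DecidableEq

instance : Fintype ConvMode where
  elems := {ConvMode.both, ConvMode.left, ConvMode.right}
  complete := by intro x; cases x <;> simp

variable {A B : Type*} {σ τ : Type}

/-- A DFA accepting the convolution of two regular languages. -/
def convDFA (M : DFA A σ) (N : DFA B τ) :
    DFA (ConvAlphabet A B) (Option (σ × τ × ConvMode)) where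
  step x c :=
    match x, c with
    | none, _ => none
    | some (s, t, ConvMode.both), Sum.inl (a, b) =>
        some (M.step s a, N.step t b, ConvMode.both)
    | some (s, t, ConvMode.both), Sum.inr (Sum.inl a) => some (M.step s a, t, ConvMode.left)
    | some (s, t, ConvMode.both), Sum.inr (Sum.inr b) => some (s, N.step t b, ConvMode.right)
    | some (s, t, ConvMode.left), Sum.inr (Sum.inl a) => some (M.step s a, t, ConvMode.left)
    | some (_, _, ConvMode.left), Sum.inl _ => none
    | some (_, _, ConvMode.left), Sum.inr (Sum.inr _) => none
    | some (s, t, ConvMode.right), Sum.inr (Sum.inr b) => some (s, N.step t b, ConvMode.right)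
    | some (_, _, ConvMode.right), Sum.inl _ => none
    | some (_, _, ConvMode.right), Sum.inr (Sum.inl _) => none
  start := some (M.start, N.start, ConvMode.both)
  accept := {x | ∃ s t m, x = some (s, t, m) ∧ s ∈ M.accept ∧ t ∈ N.accept}

variable (M : DFA A σ) (N : DFA B τ)

lemma convDFA_none : ∀ w : List (ConvAlphabet A B), (convDFA M N).evalFrom none w = none
  | [] => rfl
  | c :: w => by
    show (convDFA M N).evalFrom ((convDFA M N).step none c) w = none
    have : (convDFA M N).step none c = none := rfl
    rw [this, convDFA_none w]

lemma convDFA_right : ∀ (v : List B) (s : σ) (t : τ),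
    (convDFA M N).evalFrom (some (s, t, ConvMode.right)) (conv ([] : List A) v) =
      some (s, N.evalFrom t v, ConvMode.right)
  | [], s, t => by rw [conv_nil_nil]; rfl
  | b :: v, s, t => by
    rw [conv_nil_cons]
    show (convDFA M N).evalFrom (some (s, N.step t b, ConvMode.right)) (conv [] v) = _
    rw [convDFA_right v s (N.step t b)]
    rfl

lemma convDFA_left : ∀ (u : List A) (s : σ) (t : τ),
    (convDFA M N).evalFrom (some (s, t, ConvMode.left)) (conv u ([] : List B)) =
      some (M.evalFrom s u, t, ConvMode.left)
  | [], s, t => by rw [conv_nil_nil]; rfl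
  | a :: u, s, t => by
    rw [conv_cons_nil]
    show (convDFA M N).evalFrom (some (M.step s a, t, ConvMode.left)) (conv u []) = _
    rw [convDFA_left u (M.step s a) t]
    rfl

lemma convDFA_conv : ∀ (u : List A) (v : List B) (s : σ) (t : τ),
    ∃ m : ConvMode, (convDFA M N).evalFrom (some (s, t, ConvMode.both)) (conv u v) =
      some (M.evalFrom s u, N.evalFrom t v, m)
  | [], [], s, t => ⟨ConvMode.both, by rw [conv_nil_nil]; rfl⟩
  | [], b :: v, s, t => by
    refine ⟨ConvMode.right, ?_⟩
    rw [conv_nil_cons]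
    show (convDFA M N).evalFrom (some (s, N.step t b, ConvMode.right)) (conv [] v) = _
    rw [convDFA_right M N v s (N.step t b)]
    rfl
  | a :: u, [], s, t => by
    refine ⟨ConvMode.left, ?_⟩
    rw [conv_cons_nil]
    show (convDFA M N).evalFrom (some (M.step s a, t, ConvMode.left)) (conv u []) = _
    rw [convDFA_left M N u (M.step s a) t]
    rfl
  | a :: u, b :: v, s, t => by
    obtain ⟨m, hm⟩ := convDFA_conv u v (M.step s a) (N.step t b)
    refine ⟨m, ?_⟩
    rw [conv_cons_cons]
    show (convDFA M N).evalFrom (some (M.step s a, N.step t b, ConvMode.both)) (conv u v) = _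
    rw [hm]
    rfl

lemma convDFA_left_inv : ∀ (w : List (ConvAlphabet A B)) (s : σ) (t : τ),
    (convDFA M N).evalFrom (some (s, t, ConvMode.left)) w ∈ (convDFA M N).accept →
      ∃ u : List A, w = conv u [] ∧ M.evalFrom s u ∈ M.accept ∧ t ∈ N.accept
  | [], s, t => by
    rintro ⟨s', t', m, heq, hs, ht⟩
    obtain ⟨rfl, rfl, -⟩ : s = s' ∧ t = t' ∧ ConvMode.left = m := by
      simpa using heq
    exact ⟨[], (conv_nil_nil).symm, hs, ht⟩
  | c :: w, s, t => by
    intro hacc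
    match c with
    | Sum.inl (a, b) =>
      exfalso
      have : (convDFA M N).evalFrom none w ∈ (convDFA M N).accept := hacc
      rw [convDFA_none] at this
      rcases this with ⟨_, _, _, h, -⟩
      exact Option.some_ne_none _ h.symm
    | Sum.inr (Sum.inr b) =>
      exfalso
      have : (convDFA M N).evalFrom none w ∈ (convDFA M N).accept := hacc
      rw [convDFA_none] at this
      rcases this with ⟨_, _, _, h, -⟩
      exact Option.some_ne_none _ h.symm
    | Sum.inr (Sum.inl a) =>
      have : (convDFA M N).evalFrom (some (M.step s a, t, ConvMode.left)) w ∈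
          (convDFA M N).accept := hacc
      obtain ⟨u, hw, hu, ht⟩ := convDFA_left_inv w (M.step s a) t this
      exact ⟨a :: u, by rw [conv_cons_nil, hw], hu, ht⟩

lemma convDFA_right_inv : ∀ (w : List (ConvAlphabet A B)) (s : σ) (t : τ),
    (convDFA M N).evalFrom (some (s, t, ConvMode.right)) w ∈ (convDFA M N).accept →
      ∃ v : List B, w = conv ([] : List A) v ∧ s ∈ M.accept ∧ N.evalFrom t v ∈ N.accept
  | [], s, t => by
    rintro ⟨s', t', m, heq, hs, ht⟩
    obtain ⟨rfl, rfl, -⟩ : s = s' ∧ t = t' ∧ ConvMode.right = m := by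
      simpa using heq
    exact ⟨[], (conv_nil_nil).symm, hs, ht⟩
  | c :: w, s, t => by
    intro hacc
    match c with
    | Sum.inl (a, b) =>
      exfalso
      have : (convDFA M N).evalFrom none w ∈ (convDFA M N).accept := hacc
      rw [convDFA_none] at this
      rcases this with ⟨_, _, _, h, -⟩
      exact Option.some_ne_none _ h.symm
    | Sum.inr (Sum.inl a) =>
      exfalso
      have : (convDFA M N).evalFrom none w ∈ (convDFA M N).accept := hacc
      rw [convDFA_none] at this
      rcases this with ⟨_, _, _, h, -⟩
      exact Option.some_ne_none _ h.symm
    | Sum.inr (Sum.inr b) =>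
      have : (convDFA M N).evalFrom (some (s, N.step t b, ConvMode.right)) w ∈
          (convDFA M N).accept := hacc
      obtain ⟨v, hw, hs, hv⟩ := convDFA_right_inv w s (N.step t b) this
      exact ⟨b :: v, by rw [conv_nil_cons, hw], hs, hv⟩

lemma convDFA_both_inv : ∀ (w : List (ConvAlphabet A B)) (s : σ) (t : τ),
    (convDFA M N).evalFrom (some (s, t, ConvMode.both)) w ∈ (convDFA M N).accept →
      ∃ (u : List A) (v : List B), w = conv u v ∧
        M.evalFrom s u ∈ M.accept ∧ N.evalFrom t v ∈ N.accept
  | [], s, t => by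
    rintro ⟨s', t', m, heq, hs, ht⟩
    obtain ⟨rfl, rfl, -⟩ : s = s' ∧ t = t' ∧ ConvMode.both = m := by
      simpa using heq
    exact ⟨[], [], (conv_nil_nil).symm, hs, ht⟩
  | c :: w, s, t => by
    intro hacc
    match c with
    | Sum.inl (a, b) =>
      have : (convDFA M N).evalFrom (some (M.step s a, N.step t b, ConvMode.both)) w ∈
          (convDFA M N).accept := hacc
      obtain ⟨u, v, hw, hu, hv⟩ := convDFA_both_inv w (M.step s a) (N.step t b) this
      exact ⟨a :: u, b :: v, by rw [conv_cons_cons, hw], hu, hv⟩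
    | Sum.inr (Sum.inl a) =>
      have : (convDFA M N).evalFrom (some (M.step s a, t, ConvMode.left)) w ∈
          (convDFA M N).accept := hacc
      obtain ⟨u, hw, hu, ht⟩ := convDFA_left_inv M N w (M.step s a) t this
      exact ⟨a :: u, [], by rw [conv_cons_nil, hw], hu, ht⟩
    | Sum.inr (Sum.inr b) =>
      have : (convDFA M N).evalFrom (some (s, N.step t b, ConvMode.right)) w ∈
          (convDFA M N).accept := hacc
      obtain ⟨v, hw, hs, hv⟩ := convDFA_right_inv M N w s (N.step t b) this
      exact ⟨[], b :: v, by rw [conv_nil_cons, hw], hs, hv⟩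

lemma convDFA_accepts : (convDFA M N).accepts = convLang M.accepts N.accepts := by
  ext w
  rw [DFA.mem_accepts]
  constructor
  · intro hw
    obtain ⟨u, v, hweq, hu, hv⟩ := convDFA_both_inv M N w M.start N.start hw
    refine ⟨u, ?_, v, ?_, hweq⟩
    · rw [DFA.mem_accepts]; exact hu
    · rw [DFA.mem_accepts]; exact hv
  · rintro ⟨u, hu, v, hv, rfl⟩
    obtain ⟨m, hm⟩ := convDFA_conv M N u v M.start N.start
    show DFA.evalFrom (convDFA M N) (some (M.start, N.start, ConvMode.both)) (conv u v) ∈ _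
    rw [hm]
    exact ⟨M.evalFrom M.start u, N.evalFrom N.start v, m, rfl, hu, hv⟩

lemma isRegular_convLang {L₁ : Language A} {L₂ : Language B}
    (h₁ : IsRegular L₁) (h₂ : IsRegular L₂) : IsRegular (convLang L₁ L₂) := by
  obtain ⟨σ, _, M, rfl⟩ := h₁
  obtain ⟨τ, _, N, rfl⟩ := h₂
  exact ⟨Option (σ × τ × ConvMode), inferInstance, convDFA M N, convDFA_accepts M N⟩

end ConvDFA

section ConvAuto

variable {B G₂ : Type*} [Group G₂]

lemma conv_isAutomatic (π₂ : FreeMonoid B →* G₂) (hπ₂ : Function.Surjective π₂)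
    {L₂ : Language B} (h₂ : IsAutomaticStructure π₂ L₂) :
    IsAutomaticStructure (convHom π₂ π₂) (convLang L₂ L₂) := by
  have hπc : Function.Surjective (convHom π₂ π₂) := convHom_surjective π₂ π₂ hπ₂ hπ₂
  refine ⟨isRegular_convLang h₂.regular h₂.regular, ?_, ?_⟩
  · intro g
    obtain ⟨u, hu, hue⟩ := h₂.onto g.1
    obtain ⟨v, hv, hve⟩ := h₂.onto g.2
    exact ⟨conv u v, ⟨u, hu, v, hv, rfl⟩, by rw [evalW_conv, hue, hve]⟩
  · obtain ⟨N₀, hN₀⟩ := ft_nat h₂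
    refine ⟨N₀ + N₀, ?_⟩
    rintro w ⟨u, hu, v, hv, rfl⟩ w' ⟨u', hu', v', hv', rfl⟩ hd n
    rw [evalW_conv, evalW_conv] at hd
    have hrep : Reps (convHom π₂ π₂)
        (((evalW π₂ u, evalW π₂ v) : G₂ × G₂)⁻¹ * (evalW π₂ u', evalW π₂ v')) :=
      reps_of_surjective _ hπc _
    have h1 : wdist π₂ (evalW π₂ u) (evalW π₂ u') ≤ 1 :=
      le_trans (wdist_fst_le π₂ π₂ hrep) hd
    have h2 : wdist π₂ (evalW π₂ v) (evalW π₂ v') ≤ 1 :=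
      le_trans (wdist_snd_le π₂ π₂ hrep) hd
    have t1 := hN₀ u hu u' hu' h1 n
    have t2 := hN₀ v hv v' hv' h2 n
    have : wdist (convHom π₂ π₂) (evalW (convHom π₂ π₂) ((conv u v).take n))
        (evalW (convHom π₂ π₂) ((conv u' v').take n)) ≤ N₀ + N₀ := by
      rw [conv_take, conv_take]
      refine le_trans (wdist_conv_le π₂ π₂ (reps_of_surjective π₂ hπ₂ _)
        (reps_of_surjective π₂ hπ₂ _)) ?_
      exact add_le_add t1 t2
    exact_mod_cast this

end ConvAuto

section SyncDFA

variable {A β G : Type*} [Group G] (π : FreeMonoid A →* G) (f : β → G)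

/-- The "difference" tracked by the synchronization automaton. -/
def dvalF (p : List (A × β)) : G :=
  (evalW π (p.map Prod.fst))⁻¹ * evalW (FreeMonoid.lift f) (p.map Prod.snd)

lemma evalW_singleton (a : A) : evalW π [a] = π (FreeMonoid.of a) := by
  rw [evalW_cons, evalW_nil, mul_one]

lemma dvalF_nil : dvalF π f [] = 1 := by
  simp [dvalF, evalW_nil]

lemma dvalF_append_singleton (p : List (A × β)) (c : A × β) :
    dvalF π f (p ++ [c]) = (π (FreeMonoid.of c.1))⁻¹ * dvalF π f p * f c.2 := by
  simp only [dvalF, List.map_append, List.map_cons, List.map_nil, evalW_append,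
    evalW_singleton, FreeMonoid.lift_eval_of]
  group

variable {sB : ℕ} (k : ℕ) (enc : ↥(Bset π k) ≃ Fin sB)

open Classical in
/-- The synchronization automaton: tracks the difference `dvalF` within the ball. -/
noncomputable def syncDFA : DFA (A × β) (Option (Fin sB)) where
  step x c :=
    match x with
    | none => none
    | some j =>
      if hmem : (π (FreeMonoid.of c.1))⁻¹ * ((enc.symm j : ↥(Bset π k)) : G) * f c.2
          ∈ Bset π k
      then some (enc ⟨_, hmem⟩) else none
  start := some (enc ⟨1, one_mem_Bset π k⟩)
  accept := {x | x = some (enc ⟨1, one_mem_Bset π k⟩)}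

open Classical in
lemma syncDFA_step_some (j : Fin sB) (c : A × β) :
    (syncDFA π f k enc).step (some j) c =
      if hmem : (π (FreeMonoid.of c.1))⁻¹ * ((enc.symm j : ↥(Bset π k)) : G) * f c.2
          ∈ Bset π k
      then some (enc ⟨_, hmem⟩) else none := rfl

lemma syncDFA_step_none (c : A × β) : (syncDFA π f k enc).step none c = none := rfl

lemma syncDFA_eval_nil :
    (syncDFA π f k enc).eval [] = some (enc ⟨1, one_mem_Bset π k⟩) := rfl

lemma syncDFA_eval_of (p : List (A × β))
    (hall : ∀ n, dvalF π f (p.take n) ∈ Bset π k) :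
    ∃ hmem : dvalF π f p ∈ Bset π k,
      (syncDFA π f k enc).eval p = some (enc ⟨dvalF π f p, hmem⟩) := by
  induction p using List.reverseRecOn with
  | nil =>
    refine ⟨by rw [dvalF_nil]; exact one_mem_Bset π k, ?_⟩
    rw [syncDFA_eval_nil]
    congr 1
    exact congrArg enc (Subtype.ext (dvalF_nil π f).symm)
  | append_singleton p c ih =>
    have hall' : ∀ n, dvalF π f (p.take n) ∈ Bset π k := by
      intro n
      rcases le_or_gt n p.length with hn | hn
      · have := hall n
        rwa [List.take_append_of_le_length hn] at this
      · have := hall p.length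
        rw [List.take_append_of_le_length le_rfl, List.take_length] at this
        rwa [List.take_of_length_le (le_of_lt hn)]
    obtain ⟨hmem, hev⟩ := ih hall'
    have key : (π (FreeMonoid.of c.1))⁻¹ * dvalF π f p * f c.2 = dvalF π f (p ++ [c]) :=
      (dvalF_append_singleton π f p c).symm
    have hmem' : dvalF π f (p ++ [c]) ∈ Bset π k := by
      have := hall (p.length + 1)
      rwa [List.take_of_length_le (by simp)] at this
    have hm : (π (FreeMonoid.of c.1))⁻¹ * dvalF π f p * f c.2 ∈ Bset π k := by
      rw [key]; exact hmem'
    refine ⟨hmem', ?_⟩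
    rw [DFA.eval_append_singleton, hev, syncDFA_step_some, Equiv.symm_apply_apply,
      dif_pos hm]
    congr 1
    exact congrArg enc (Subtype.ext key)

lemma syncDFA_eval_inv (p : List (A × β)) (hne : (syncDFA π f k enc).eval p ≠ none) :
    (∀ n, dvalF π f (p.take n) ∈ Bset π k) ∧
      ∃ hmem : dvalF π f p ∈ Bset π k,
        (syncDFA π f k enc).eval p = some (enc ⟨dvalF π f p, hmem⟩) := by
  induction p using List.reverseRecOn with
  | nil =>
    refine ⟨fun n => by rw [List.take_nil, dvalF_nil]; exact one_mem_Bset π k,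
      by rw [dvalF_nil]; exact one_mem_Bset π k, ?_⟩
    rw [syncDFA_eval_nil]
    congr 1
    exact congrArg enc (Subtype.ext (dvalF_nil π f).symm)
  | append_singleton p c ih =>
    have hstep : (syncDFA π f k enc).eval (p ++ [c]) =
        (syncDFA π f k enc).step ((syncDFA π f k enc).eval p) c :=
      DFA.eval_append_singleton _ _ _
    have hpne : (syncDFA π f k enc).eval p ≠ none := by
      intro h0
      apply hne
      rw [hstep, h0, syncDFA_step_none]
    obtain ⟨hall, hmem, hev⟩ := ih hpne
    rw [hstep, hev, syncDFA_step_some, Equiv.symm_apply_apply] at hne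
    have key : (π (FreeMonoid.of c.1))⁻¹ * dvalF π f p * f c.2 = dvalF π f (p ++ [c]) :=
      (dvalF_append_singleton π f p c).symm
    by_cases hm : (π (FreeMonoid.of c.1))⁻¹ * dvalF π f p * f c.2 ∈ Bset π k
    · have hmem' : dvalF π f (p ++ [c]) ∈ Bset π k := by rw [← key]; exact hm
      refine ⟨?_, hmem', ?_⟩
      · intro n
        rcases le_or_gt n p.length with hn | hn
        · rw [List.take_append_of_le_length hn]
          exact hall n
        · rw [List.take_of_length_le (by simpa using hn)]
          exact hmem'
      · rw [hstep, hev, syncDFA_step_some, Equiv.symm_apply_apply, dif_pos hm]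
        congr 1
        exact congrArg enc (Subtype.ext key)
    · exfalso
      apply hne
      rw [dif_neg hm]

lemma syncDFA_accepts (p : List (A × β)) :
    p ∈ (syncDFA π f k enc).accepts ↔
      (∀ n, dvalF π f (p.take n) ∈ Bset π k) ∧ dvalF π f p = 1 := by
  constructor
  · intro hp
    have hacc : (syncDFA π f k enc).eval p = some (enc ⟨1, one_mem_Bset π k⟩) :=
      (DFA.mem_accepts _).1 hp
    have hne : (syncDFA π f k enc).eval p ≠ none := by
      rw [hacc]; exact Option.some_ne_none _
    obtain ⟨hall, hmem, hev⟩ := syncDFA_eval_inv π f k enc p hne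
    refine ⟨hall, ?_⟩
    rw [hev] at hacc
    have := enc.injective (Option.some_injective _ hacc)
    exact congrArg Subtype.val this
  · rintro ⟨hall, hone⟩
    obtain ⟨hmem, hev⟩ := syncDFA_eval_of π f k enc p hall
    refine (DFA.mem_accepts _).2 ?_
    rw [hev]
    show _ = some (enc ⟨1, one_mem_Bset π k⟩)
    congr 1
    exact congrArg enc (Subtype.ext hone)

end SyncDFA

section QcAuto

variable {A G : Type*} [Group G]

lemma Bset_inv {π : FreeMonoid A →* G} {j : ℕ} {g : G} (hg : g ∈ Bset π j) :
    g⁻¹ ∈ Bset π j := by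
  obtain ⟨l, h1, h2, h3⟩ := hg
  refine ⟨(l.map fun x => x⁻¹).reverse, by simpa using h1, ?_, by
    rw [← List.prod_inv_reverse, h3]⟩
  intro x hx
  rcases List.mem_map.1 (List.mem_reverse.1 hx) with ⟨y, hy, rfl⟩
  exact gens_inv π (h2 y hy)

theorem isAutomaticGroup_of_quasiconvex [Fintype A] (π : FreeMonoid A →* G)
    (hπ : Function.Surjective π) (L : Language A)
    (hL : IsAutomaticStructure π L) (H : Subgroup G)
    (hqc : IsQuasiconvex π L H) : IsAutomaticGroup ↥H := by
  classical
  obtain ⟨k, hk⟩ := hqc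
  set S : Set ↥H := {h : ↥H | (h : G) ∈ Bset π (2 * k + 1)} with hS
  have hSfin : S.Finite :=
    Set.Finite.preimage (Subtype.coe_injective.injOn) (Bset_finite π (2 * k + 1))
  haveI : Fintype ↥S := hSfin.fintype
  set m : ℕ := Fintype.card ↥S with hm
  set e : ↥S ≃ Fin m := Fintype.equivFin ↥S with he
  set ℓ : Fin m → ↥H := fun i => ((e.symm i : ↥S) : ↥H) with hℓ
  set πH : FreeMonoid (Fin m) →* ↥H := FreeMonoid.lift ℓ with hπH
  set f : Fin m → G := fun i => ((ℓ i : ↥H) : G) with hf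
  have hπHof : ∀ i : Fin m, πH (FreeMonoid.of i) = ℓ i := fun i => by
    rw [hπH]; exact FreeMonoid.lift_eval_of ℓ i
  have hℓS : ∀ i : Fin m, ((ℓ i : ↥H) : G) ∈ Bset π (2 * k + 1) := fun i =>
    (e.symm i).2
  have hcoe : ∀ c : List (Fin m),
      evalW (FreeMonoid.lift f) c = ((evalW πH c : ↥H) : G) := by
    intro c
    induction c with
    | nil => rw [evalW_nil, evalW_nil, OneMemClass.coe_one]
    | cons i t ih =>
      rw [evalW_cons, evalW_cons, ih, FreeMonoid.lift_eval_of, hπHof,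
        Subgroup.coe_mul, hf]
  set LH : Language (Fin m) := {c | ∃ w ∈ L, w.length = c.length ∧
    (∀ n, (evalW π (w.take n))⁻¹ * ((evalW πH (c.take n) : ↥H) : G) ∈ Bset π k) ∧
    evalW π w = ((evalW πH c : ↥H) : G)} with hLH
  -- onto
  have onto : ∀ h' : ↥H, ∃ c ∈ LH, evalW πH c = h' := by
    intro h'
    obtain ⟨w, hw, hwe⟩ := hL.onto (h' : G)
    have hchain := hk 1 H.one_mem (h' : G) h'.2 w hw (by rw [one_mul]; exact hwe)
    have hzex : ∀ n, ∃ z : ↥H, wdist π (evalW π (w.take n)) (z : G) ≤ k := by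
      intro n
      obtain ⟨z, hzH, hzd⟩ := hchain n
      exact ⟨⟨z, hzH⟩, by rwa [one_mul] at hzd⟩
    set Z : ℕ → ↥H := fun n => if n = 0 then 1 else if w.length ≤ n then h'
      else (hzex n).choose with hZ
    have hZ0 : Z 0 = 1 := by simp [hZ]
    have hZd : ∀ n, wdist π (evalW π (w.take n)) ((Z n : ↥H) : G) ≤ k := by
      intro n
      by_cases h0 : n = 0
      · subst h0
        rw [hZ0, List.take_zero, evalW_nil, OneMemClass.coe_one, wdist_self]
        exact Nat.zero_le k
      · rw [hZ]
        simp only [if_neg h0]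
        by_cases hlen : w.length ≤ n
        · rw [if_pos hlen, List.take_of_length_le hlen, hwe, wdist_self]
          exact Nat.zero_le k
        · rw [if_neg hlen]
          exact (hzex n).choose_spec
    set δ : ℕ → ↥H := fun n => (Z n)⁻¹ * Z (n + 1) with hδ
    have hδS : ∀ n, δ n ∈ S := by
      intro n
      show ((δ n : ↥H) : G) ∈ Bset π (2 * k + 1)
      have h1 : wdist π ((Z n : ↥H) : G) (evalW π (w.take n)) ≤ k :=
        le_trans (wdist_symm_le π (reps_of_surjective π hπ _)) (hZd n)
      have h2 : wdist π (evalW π (w.take n)) (evalW π (w.take (n + 1))) ≤ 1 :=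
        wdist_take_succ π n
      have h3 := hZd (n + 1)
      have tri : wdist π ((Z n : ↥H) : G) ((Z (n + 1) : ↥H) : G) ≤ 2 * k + 1 := by
        have t1 := wdist_triangle π (g := ((Z n : ↥H) : G))
          (m := evalW π (w.take n)) (h := ((Z (n + 1) : ↥H) : G))
          (reps_of_surjective π hπ _) (reps_of_surjective π hπ _)
        have t2 := wdist_triangle π (g := evalW π (w.take n))
          (m := evalW π (w.take (n + 1))) (h := ((Z (n + 1) : ↥H) : G))
          (reps_of_surjective π hπ _) (reps_of_surjective π hπ _)
        omega
      have hmem := mem_Bset_of_wdist π (reps_of_surjective π hπ _) tri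
      rw [hδ]
      rw [Subgroup.coe_mul, InvMemClass.coe_inv]
      exact hmem
    set cl : List (Fin m) := List.ofFn (fun j : Fin w.length => e ⟨δ j, hδS j⟩) with hc
    have hclen : cl.length = w.length := by rw [hc]; exact List.length_ofFn
    have hceval : ∀ n, n ≤ w.length → evalW πH (cl.take n) = Z n := by
      intro n
      induction n with
      | zero => intro _; rw [List.take_zero, evalW_nil, hZ0]
      | succ n ih =>
        intro hn
        have hn' : n < w.length := Nat.lt_of_succ_le hn
        have hget : cl[n]? = some (e ⟨δ n, hδS n⟩) := by
          rw [hc, List.getElem?_ofFn, dif_pos hn']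
        rw [List.take_succ, evalW_append, ih (le_of_lt hn'), hget]
        show Z n * evalW πH [e ⟨δ n, hδS n⟩] = Z (n + 1)
        rw [evalW_singleton, hπHof]
        have : ℓ (e ⟨δ n, hδS n⟩) = δ n := by
          show ((e.symm (e ⟨δ n, hδS n⟩) : ↥S) : ↥H) = δ n
          rw [Equiv.symm_apply_apply]
        rw [this, hδ, mul_inv_cancel_left]
    have hcfull : evalW πH cl = Z w.length := by
      have := hceval w.length le_rfl
      rwa [List.take_of_length_le (le_of_eq hclen)] at this
    have hZlen : Z w.length = h' := by
      by_cases h0 : w.length = 0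
      · have hw0 : w = [] := List.length_eq_zero_iff.1 h0
        have h1 : (h' : G) = 1 := by rw [← hwe, hw0, evalW_nil]
        have h2 : Z w.length = 1 := by rw [h0, hZ0]
        rw [h2]
        exact (Subtype.ext h1).symm
      · have : ¬ (w.length = 0) := h0
        rw [hZ]
        simp only [if_neg this, if_pos le_rfl]
    refine ⟨cl, ⟨w, hw, hclen.symm, ?_, ?_⟩, by rw [hcfull, hZlen]⟩
    · intro n
      rcases le_or_gt n w.length with hn | hn
      · have hb := mem_Bset_of_wdist π (reps_of_surjective π hπ _) (hZd n)
        rwa [hceval n hn]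
      · have hn' : w.length ≤ n := le_of_lt hn
        have hn'' : cl.length ≤ n := by rw [hclen]; exact hn'
        rw [List.take_of_length_le hn', List.take_of_length_le hn'', hcfull, hZlen,
          hwe, inv_mul_cancel]
        exact one_mem_Bset π k
    · rw [hcfull, hZlen, hwe]
  have repsH : ∀ x : ↥H, Reps πH x := by
    intro x
    obtain ⟨c, -, hc⟩ := onto x
    rw [← hc]
    exact reps_of_eval πH c
  have repsH2 : ∀ x y : ↥H, Reps πH (x⁻¹ * y) := fun x y => repsH _
  have hgenB : ∀ x : ↥H, x ∈ gens πH → (x : G) ∈ Bset π (2 * k + 1) := by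
    rintro x (⟨i, rfl⟩ | ⟨i, rfl⟩)
    · show ((πH (FreeMonoid.of i) : ↥H) : G) ∈ Bset π (2 * k + 1)
      rw [hπHof]; exact hℓS i
    · show (((πH (FreeMonoid.of i))⁻¹ : ↥H) : G) ∈ Bset π (2 * k + 1)
      rw [InvMemClass.coe_inv, hπHof]
      exact Bset_inv (hℓS i)
  have hexpand : ∀ l : List ↥H, (∀ x ∈ l, x ∈ gens πH) →
      ∃ Lg : List G, Lg.length ≤ (2 * k + 1) * l.length ∧
        (∀ x ∈ Lg, x ∈ gens π) ∧ Lg.prod = ((l.prod : ↥H) : G) := by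
    intro l
    induction l with
    | nil =>
      exact fun _ => ⟨[], by simp, by simp, by
        rw [List.prod_nil, List.prod_nil, OneMemClass.coe_one]⟩
    | cons a t ih =>
      intro hmem
      obtain ⟨Lg, h1, h2, h3⟩ := ih (fun x hx => hmem x (List.mem_cons_of_mem a hx))
      obtain ⟨la, la1, la2, la3⟩ := hgenB a (hmem a (List.mem_cons_self))
      refine ⟨la ++ Lg, ?_, ?_, ?_⟩
      · rw [List.length_append, List.length_cons, Nat.mul_succ]
        omega
      · intro x hx
        rcases List.mem_append.1 hx with hx | hx
        exacts [la2 x hx, h2 x hx]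
      · rw [List.prod_append, la3, h3, List.prod_cons, Subgroup.coe_mul]
  have hlip : ∀ x y : ↥H, wdist π (x : G) (y : G) ≤ (2 * k + 1) * wdist πH x y := by
    intro x y
    obtain ⟨l, hlen, hmem, hprod⟩ := wdist_min πH (repsH2 x y)
    obtain ⟨Lg, h1, h2, h3⟩ := hexpand l hmem
    refine le_trans (wdist_le π h2 ?_) (by rw [← hlen]; exact h1)
    rw [h3, hprod, Subgroup.coe_mul, InvMemClass.coe_inv]
  have hundist : ∀ K : ℕ, ∃ N : ℕ, ∀ x y : ↥H, wdist π (x : G) (y : G) ≤ K →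
      wdist πH x y ≤ N := by
    intro K
    have hFfin : {h : ↥H | (h : G) ∈ Bset π K}.Finite :=
      Set.Finite.preimage (Subtype.coe_injective.injOn) (Bset_finite π K)
    refine ⟨hFfin.toFinset.sup fun d => wdist πH 1 d, ?_⟩
    intro x y hd
    have hmem : x⁻¹ * y ∈ {h : ↥H | (h : G) ∈ Bset π K} := by
      show ((x⁻¹ * y : ↥H) : G) ∈ Bset π K
      rw [Subgroup.coe_mul, InvMemClass.coe_inv]
      exact mem_Bset_of_wdist π (reps_of_surjective π hπ _) hd
    have heq : wdist πH x y = wdist πH 1 (x⁻¹ * y) := wdist_congr πH (by group)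
    rw [heq]
    exact Finset.le_sup (hFfin.mem_toFinset.2 hmem)
  obtain ⟨NK, hNK⟩ := ext_ft hπ hL (2 * k + 1)
  obtain ⟨NH, hNH⟩ := hundist (k + (NK + k))
  have hft : ∀ u ∈ LH, ∀ v ∈ LH, wdist πH (evalW πH u) (evalW πH v) ≤ 1 →
      ∀ n, wdist πH (evalW πH (u.take n)) (evalW πH (v.take n)) ≤ NH := by
    intro u hu v hv hd n
    obtain ⟨w, hw, hwlen, hwsync, hwend⟩ := hu
    obtain ⟨w', hw', hwlen', hwsync', hwend'⟩ := hv
    have hG : wdist π (evalW π w) (evalW π w') ≤ 2 * k + 1 := by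
      rw [hwend, hwend']
      calc wdist π ((evalW πH u : ↥H) : G) ((evalW πH v : ↥H) : G)
          ≤ (2 * k + 1) * wdist πH (evalW πH u) (evalW πH v) := hlip _ _
        _ ≤ (2 * k + 1) * 1 := Nat.mul_le_mul_left _ hd
        _ = 2 * k + 1 := by rw [mul_one]
    have hpre := hNK w hw w' hw' hG n
    have d1 : wdist π (evalW π (w.take n)) ((evalW πH (u.take n) : ↥H) : G) ≤ k := by
      have h2 := wdist_le_of_mem_Bset π (hwsync n)
      have e : (1 : G)⁻¹ * ((evalW π (w.take n))⁻¹ * ((evalW πH (u.take n) : ↥H) : G)) =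
          (evalW π (w.take n))⁻¹ * ((evalW πH (u.take n) : ↥H) : G) := by group
      rwa [wdist_congr π e] at h2
    have d2 : wdist π (evalW π (w'.take n)) ((evalW πH (v.take n) : ↥H) : G) ≤ k := by
      have h2 := wdist_le_of_mem_Bset π (hwsync' n)
      have e : (1 : G)⁻¹ * ((evalW π (w'.take n))⁻¹ * ((evalW πH (v.take n) : ↥H) : G)) =
          (evalW π (w'.take n))⁻¹ * ((evalW πH (v.take n) : ↥H) : G) := by group
      rwa [wdist_congr π e] at h2
    have s1 : wdist π ((evalW πH (u.take n) : ↥H) : G) (evalW π (w.take n)) ≤ k :=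
      le_trans (wdist_symm_le π (reps_of_surjective π hπ _)) d1
    have t2 : wdist π (evalW π (w.take n)) ((evalW πH (v.take n) : ↥H) : G) ≤ NK + k :=
      le_trans (wdist_triangle π (m := evalW π (w'.take n))
        (reps_of_surjective π hπ _) (reps_of_surjective π hπ _)) (add_le_add hpre d2)
    have dG : wdist π ((evalW πH (u.take n) : ↥H) : G)
        ((evalW πH (v.take n) : ↥H) : G) ≤ k + (NK + k) :=
      le_trans (wdist_triangle π (m := evalW π (w.take n))
        (reps_of_surjective π hπ _) (reps_of_surjective π hπ _)) (add_le_add s1 t2)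
    exact hNH _ _ dG
  obtain ⟨σL, instL, ML, hML⟩ := hL.regular
  haveI : Fintype ↥(Bset π k) := (Bset_finite π k).fintype
  set enc : ↥(Bset π k) ≃ Fin (Fintype.card ↥(Bset π k)) := Fintype.equivFin _ with henc
  set Mp : DFA (A × Fin m) (σL × Option (Fin (Fintype.card ↥(Bset π k)))) :=
    dfaProd (dfaComap Prod.fst ML) (syncDFA π f k enc) with hMp
  have hLHeq : LH = {c : List (Fin m) |
      ∃ p : List (A × Fin m), p.map Prod.snd = c ∧ p ∈ Mp.accepts} := by
    ext c
    constructor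
    · rintro ⟨w, hw, hlen, hsync, hend⟩
      refine ⟨w.zip c, List.map_snd_zip (le_of_eq hlen.symm), ?_⟩
      rw [hMp, dfaProd_mem_accepts]
      have h1 : (w.zip c).map Prod.fst = w := List.map_fst_zip (le_of_eq hlen)
      have h2 : (w.zip c).map Prod.snd = c := List.map_snd_zip (le_of_eq hlen.symm)
      constructor
      · have : (w.zip c) ∈ (dfaComap (Prod.fst : A × Fin m → A) ML).accepts ↔
            (w.zip c).map Prod.fst ∈ ML.accepts := by
          rw [dfaComap_accepts]
          exact Iff.rfl
        rw [this, h1, hML]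
        exact hw
      · rw [syncDFA_accepts]
        constructor
        · intro n
          simp only [dvalF]
          rw [List.map_take, List.map_take, h1, h2, hcoe]
          exact hsync n
        · simp only [dvalF]
          rw [h1, h2, hcoe, ← hend, inv_mul_cancel]
    · rintro ⟨p, rfl, hp⟩
      rw [hMp, dfaProd_mem_accepts] at hp
      obtain ⟨hp1, hp2⟩ := hp
      rw [syncDFA_accepts] at hp2
      obtain ⟨hall, hone⟩ := hp2
      refine ⟨p.map Prod.fst, ?_, by rw [List.length_map, List.length_map], ?_, ?_⟩
      · have : p ∈ (dfaComap (Prod.fst : A × Fin m → A) ML).accepts ↔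
            p.map Prod.fst ∈ ML.accepts := by
          rw [dfaComap_accepts]
          exact Iff.rfl
        rw [← hML]
        exact this.1 hp1
      · intro n
        have hthis := hall n
        simp only [dvalF] at hthis
        rwa [List.map_take, List.map_take, hcoe] at hthis
      · have hthis := hone
        simp only [dvalF] at hthis
        rw [hcoe] at hthis
        exact inv_mul_eq_one.1 hthis
  have hreg : IsRegular LH := by
    rw [hLHeq]
    exact isRegular_proj Prod.snd Mp
  refine ⟨Fin m, inferInstance, πH, LH, hreg, fun g => onto g, ⟨NH, ?_⟩⟩
  intro u hu v hv hd n
  have := hft u hu v hv hd n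
  exact_mod_cast this

end QcAuto

end Auto

open Auto

/-- If the synchronous BRP holds for `(φ, L₁, L₂)` and `(ψ, L₁, L₂)`, then
the subgroup `{(xφ, xψ) : x ∈ Eq(φ,ψ)}` of `G₂ × G₂`, which equals the intersection of
the diagonal with the image of `x ↦ (xφ, xψ)`, is `(L₂ ⋄ L₂)`-quasiconvex; in particular
it is an automatic group. -/
theorem equalizer_quasiconvex {A B G₁ G₂ : Type*} [Fintype A] [Fintype B]
    [Group G₁] [Group G₂]
    (π₁ : FreeMonoid A →* G₁) (hπ₁ : Function.Surjective π₁)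
    (π₂ : FreeMonoid B →* G₂) (hπ₂ : Function.Surjective π₂)
    (L₁ : Language A) (L₂ : Language B)
    (h₁ : IsAutomaticStructure π₁ L₁) (h₂ : IsAutomaticStructure π₂ L₂)
    (φ ψ : G₁ →* G₂)
    (hφ : SyncBRP π₁ π₂ φ L₁ L₂) (hψ : SyncBRP π₁ π₂ ψ L₁ L₂) :
    IsQuasiconvex (convHom π₂ π₂) (convLang L₂ L₂)
        (((MonoidHom.id G₂).prod (MonoidHom.id G₂)).range ⊓ (φ.prod ψ).range) ∧
      IsAutomaticGroup
        ↥(((MonoidHom.id G₂).prod (MonoidHom.id G₂)).range ⊓ (φ.prod ψ).range) := by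
  have hqc := quasiconvex_of_syncBRP π₁ π₂ hπ₂ L₁ L₂ h₁ h₂ φ ψ hφ hψ
  exact ⟨hqc, isAutomaticGroup_of_quasiconvex (convHom π₂ π₂)
    (convHom_surjective π₂ π₂ hπ₂ hπ₂) (convLang L₂ L₂)
    (conv_isAutomatic π₂ hπ₂ h₂) _ hqc⟩
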